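/- Let u be a Sturmian sequence over {a, b} with slope θ = ρ_a(u)/ρ_b(u) < 1 and set δ = θ^{−1}. Then u contains a factor w with |w|_b = k and |w|_a = ℓ if and only if |ℓδ − k| < δ + 1. -/

import Mathlib

open Filter Topology Matrix
open scoped ENNReal

namespace Paper

variable {A : Type*}

/-- The factor of `u` of length `len` starting at position `i`. -/
def factorAt (u : ℕ → A) (i len : ℕ) : List A :=
  (List.range len).map fun k => u (i + k)

/-- The word `w` occurs in `u` at position `i`. -/
def OccursAt (u : ℕ → A) (w : List A) (i : ℕ) : Prop :=
  w = factorAt u i w.length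

/-- `w` is a factor of the sequence `u`. -/
def IsFactor (u : ℕ → A) (w : List A) : Prop :=
  ∃ i, OccursAt u w i

/-- `u` is recurrent: every factor occurs infinitely often. -/
def Recurrent (u : ℕ → A) : Prop :=
  ∀ w, IsFactor u w → ∀ N, ∃ i, N ≤ i ∧ OccursAt u w i

/-- `u` is uniformly recurrent: every factor occurs in every window of some fixed length. -/
def UniformlyRecurrent (u : ℕ → A) : Prop :=
  ∀ w, IsFactor u w → ∃ R, ∀ i, ∃ j, i ≤ j ∧ j < i + R ∧ OccursAt u w j

/-- `u` is eventually periodic. -/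
def EventuallyPeriodic (u : ℕ → A) : Prop :=
  ∃ p, 0 < p ∧ ∃ N, ∀ n, N ≤ n → u (n + p) = u n

/-- `u` is balanced: counts of each letter in equal-length factors differ by at most 1. -/
def IsBalanced [DecidableEq A] (u : ℕ → A) : Prop :=
  ∀ (c : A) (w w' : List A), IsFactor u w → IsFactor u w' → w.length = w'.length →
    (w.count c : ℤ) - (w'.count c : ℤ) ≤ 1

/-- `w^{n/|w|}`, i.e. the prefix of length `n` of `w^ω`, is a factor of `u`
(for a nonempty word `w`). -/
def HasPowerFactor (u : ℕ → A) (w : List A) (n : ℕ) : Prop :=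
  w ≠ [] ∧ ∃ i, ∀ k, k < n → u (i + k) = w.getD (k % w.length) (u i)

/-- The critical exponent `E(u)`. -/
noncomputable def critExp (u : ℕ → A) : ℝ≥0∞ :=
  sSup {e | ∃ w n, HasPowerFactor u w n ∧ e = (n : ℝ≥0∞) / (w.length : ℝ≥0∞)}

/-- The maximal exponent of a repetition whose root has length `l`. -/
noncomputable def maxExpLen (u : ℕ → A) (l : ℕ) : ℝ≥0∞ :=
  sSup {e | ∃ w n, (w : List A).length = l ∧ HasPowerFactor u w n ∧
    e = (n : ℝ≥0∞) / (l : ℝ≥0∞)}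

/-- The asymptotic critical exponent `E*(u)`. -/
noncomputable def acritExp (u : ℕ → A) : ℝ≥0∞ :=
  if critExp u = ⊤ then ⊤ else Filter.limsup (fun l => maxExpLen u l) Filter.atTop

/-- `w` is a right special factor of `u`. -/
def RightSpecial (u : ℕ → A) (w : List A) : Prop :=
  ∃ c c' : A, c ≠ c' ∧ IsFactor u (w ++ [c]) ∧ IsFactor u (w ++ [c'])

/-- `w` is a left special factor of `u`. -/
def LeftSpecial (u : ℕ → A) (w : List A) : Prop :=
  ∃ c c' : A, c ≠ c' ∧ IsFactor u (c :: w) ∧ IsFactor u (c' :: w)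

/-- `w` is a bispecial factor of `u`. -/
def Bispecial (u : ℕ → A) (w : List A) : Prop := LeftSpecial u w ∧ RightSpecial u w

/-- `r` is a return word to `w` in `u`: the word between two consecutive occurrences of `w`. -/
def IsReturnWord (u : ℕ → A) (w r : List A) : Prop :=
  ∃ i j, i < j ∧ OccursAt u w i ∧ OccursAt u w j ∧
    (∀ t, i < t → t < j → ¬ OccursAt u w t) ∧ r = factorAt u i (j - i)

/-- A Sturmian sequence: an aperiodic balanced sequence over the binary
alphabet `Bool` (`false` = letter a, `true` = letter b). -/
def IsSturmian (u : ℕ → Bool) : Prop :=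
  ¬ EventuallyPeriodic u ∧ IsBalanced u

/-- Prepend a letter to a sequence. -/
def prepend (c : A) (u : ℕ → A) : ℕ → A
  | 0 => c
  | n + 1 => u n

/-- A standard Sturmian sequence: `u`, `a·u` and `b·u` are all Sturmian. -/
def IsStandard (u : ℕ → Bool) : Prop :=
  IsSturmian u ∧ IsSturmian (prepend false u) ∧ IsSturmian (prepend true u)

/-- The letter `c` has frequency `ρ` in `u`. -/
def HasFreq [DecidableEq A] (u : ℕ → A) (c : A) (ρ : ℝ) : Prop :=
  Tendsto (fun n => ((factorAt u 0 n).count c : ℝ) / n) atTop (𝓝 ρ)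

/-- `u` has slope `θ = ρ_a(u)/ρ_b(u)`, with `b = true` the most frequent letter. -/
def HasSlope (u : ℕ → Bool) (θ : ℝ) : Prop :=
  ∃ ρa ρb : ℝ, HasFreq u false ρa ∧ HasFreq u true ρb ∧ ρa < ρb ∧ θ = ρa / ρb

/-- `cfP a N` is the numerator `p_{N-1}` of the convergents of the continued
fraction `[0; a 1, a 2, …]` (index shifted by one: `cfP a 0 = p_{-1} = 1`). -/
def cfP (a : ℕ → ℕ) : ℕ → ℕ
  | 0 => 1
  | 1 => 0
  | n + 2 => a (n + 1) * cfP a (n + 1) + cfP a n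

/-- `cfQ a N` is the denominator `q_{N-1}` of the convergents of the continued
fraction `[0; a 1, a 2, …]` (index shifted by one: `cfQ a 0 = q_{-1} = 0`). -/
def cfQ (a : ℕ → ℕ) : ℕ → ℕ
  | 0 => 0
  | 1 => 1
  | n + 2 => a (n + 1) * cfQ a (n + 1) + cfQ a n

/-- The value of the continued fraction `[0; a 1, a 2, …]`, as the limit of its
convergents `p_N / q_N`. -/
noncomputable def cfValue (a : ℕ → ℕ) : ℝ :=
  limUnder atTop fun N => (cfP a (N + 1) : ℝ) / (cfQ a (N + 1) : ℝ)

/-- `δ_N = [a_{N+1}; a_{N+2}, …]`, the inverse of the value of the shifted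
continued fraction `[0; a_{N+1}, a_{N+2}, …]`. -/
noncomputable def cfDelta (a : ℕ → ℕ) (N : ℕ) : ℝ :=
  (cfValue fun n => a (n + N))⁻¹

/-- `Q_{N-1} = p_{N-1} + q_{N-1}` (shifted index as in `cfP`, `cfQ`). -/
def cfQpair (a : ℕ → ℕ) (N : ℕ) : ℕ := cfP a N + cfQ a N

/-- The matrix `A_N` with rows `(p_{N-1}, p_N)` and `(q_{N-1}, q_N)`. -/
def cfMat (a : ℕ → ℕ) (N : ℕ) : Matrix (Fin 2) (Fin 2) ℤ :=
  !![(cfP a N : ℤ), (cfP a (N + 1) : ℤ); (cfQ a N : ℤ), (cfQ a (N + 1) : ℤ)]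

/-- The colouring of a binary sequence `u` by `y` (on the letter `a = false`) and
`y'` (on the letter `b = true`). -/
def colour (u : ℕ → Bool) (y y' : ℕ → A) (n : ℕ) : A :=
  if u n then y' ((List.range n).countP fun k => u k)
  else y ((List.range n).countP fun k => !u k)

/-- Colouring of a finite binary word by the sequences `y` and `y'`. -/
def colourWord : (ℕ → A) → (ℕ → A) → List Bool → List A
  | _, _, [] => []
  | y, y', c :: w =>
      if c then y' 0 :: colourWord y (fun n => y' (n + 1)) w
      else y 0 :: colourWord (fun n => y (n + 1)) y' w

/-- A constant gap sequence: every occurring letter occurs with a constant gap. -/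
def IsConstantGap (y : ℕ → A) : Prop :=
  ∀ c : A, (∃ n, y n = c) →
    ∃ g, 0 < g ∧ ∀ n, y n = c →
      y (n + g) = c ∧ ∀ t, 0 < t → t < g → y (n + t) ≠ c

/-- The minimal period of a sequence. -/
noncomputable def minPeriod (y : ℕ → A) : ℕ :=
  sInf {p | 0 < p ∧ ∀ n, y (n + p) = y n}

/-- `d` is a derived sequence of `u` to the factor `z`: coding (by a binary
alphabet, via an injective labelling `f` of return words) of the decomposition
of `u` into return words to `z`. -/
def IsDerivedSeq (u : ℕ → Bool) (z : List Bool) (d : ℕ → Bool) : Prop :=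
  ∃ (occ : ℕ → ℕ) (f : Bool → List Bool),
    StrictMono occ ∧ (∀ n, OccursAt u z (occ n)) ∧
    (∀ i, OccursAt u z i → ∃ n, occ n = i) ∧
    f true ≠ f false ∧
    ∀ n, factorAt u (occ n) (occ (n + 1) - occ n) = f (d n)

/-- The equivalence of unimodular matrices: `M ≡ M'` iff `diag(c,c')·M ≡ M'`
with the first row mod `Y` and the second row mod `Y'`, for some `c` coprime
with `Y` and `c'` coprime with `Y'`. -/
def MatEquiv (Y Y' : ℕ) (M M' : Matrix (Fin 2) (Fin 2) ℤ) : Prop :=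
  ∃ c c' : ℤ, IsCoprime c (Y : ℤ) ∧ IsCoprime c' (Y' : ℤ) ∧
    (∀ j, (Y : ℤ) ∣ (c * M 0 j - M' 0 j)) ∧
    (∀ j, (Y' : ℤ) ∣ (c' * M 1 j - M' 1 j))

/-- `δ > 1` is `(1+β)`-forcing for (the class of) the matrix `M`, with respect to
the periods `P`, `P'`. -/
def IsForcing (β : ℝ) (P P' : ℕ) (M : Matrix (Fin 2) (Fin 2) ℤ) (δ : ℝ) : Prop :=
  1 < δ ∧ ∃ m k l : ℕ, 0 < k + l ∧
    -- (P1)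
    ((P : ℤ) ∣ (M 0 0 * (l : ℤ) + M 0 1 * ((m : ℤ) * l + k)) ∧
     (P' : ℤ) ∣ (M 1 0 * (l : ℤ) + M 1 1 * ((m : ℤ) * l + k))) ∧
    -- (P2)
    ((m : ℝ) + 1 < δ ∧ |(l : ℝ) * (δ - m) - k| < δ - m + 1) ∧
    -- (P3)
    ((k = l → β < 1 / (k : ℝ)) ∧
     (l < k → β ≤ (1 + (m : ℝ)) / ((k : ℝ) + m * l)) ∧
     (k < l → β ≤ (2 + (m : ℝ)) / ((k : ℝ) + (m + 1) * l)))

/-- The set `F(β, M)` of `(1+β)`-forcing `δ`'s. -/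
def ForcingSet (β : ℝ) (P P' : ℕ) (M : Matrix (Fin 2) (Fin 2) ℤ) : Set ℝ :=
  {δ | IsForcing β P P' M δ}

/-- The set `D(β, M) = {δ > 1 : δ is not in the closure of F(β, M)}`. -/
def DSet (β : ℝ) (P P' : ℕ) (M : Matrix (Fin 2) (Fin 2) ℤ) : Set ℝ :=
  {δ | 1 < δ ∧ δ ∉ closure (ForcingSet β P P' M)}

/-- The finite Fibonacci words: fixed-point prefixes of `b ↦ ba`, `a ↦ b`,
where `b = true`, `a = false`. -/
def fibList : ℕ → List Bool
  | 0 => [true]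
  | 1 => [true, false]
  | n + 2 => fibList (n + 1) ++ fibList n

/-- The Fibonacci sequence, the fixed point of `b ↦ ba`, `a ↦ b`. -/
def fibWord (n : ℕ) : Bool := (fibList (n + 2)).getD n true

end Paper

namespace Paper

def chi (u : ℕ → Bool) (j : ℕ) : ℕ := if u j then 0 else 1
def aCnt (u : ℕ → Bool) (i n : ℕ) : ℕ := ∑ k ∈ Finset.range n, chi u (i + k)

lemma factorAt_length (u : ℕ → A) (i n : ℕ) : (factorAt u i n).length = n := by
  simp [factorAt]

lemma factorAt_succ (u : ℕ → A) (i n : ℕ) :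
    factorAt u i (n+1) = factorAt u i n ++ [u (i+n)] := by
  simp [factorAt, List.range_succ]

lemma count_false_factorAt (u : ℕ → Bool) (i n : ℕ) :
    (factorAt u i n).count false = aCnt u i n := by
  induction n with
  | zero => simp [factorAt, aCnt]
  | succ n ih =>
    rw [factorAt_succ, List.count_append, ih]
    have : aCnt u i (n+1) = aCnt u i n + chi u (i+n) := Finset.sum_range_succ _ _
    rw [this]
    rcases h : u (i+n) <;> simp [chi, h]

lemma count_true_add_count_false (w : List Bool) : w.count true + w.count false = w.length := by
  induction w with
  | nil => simp
  | cons c w ih => rcases c <;> simp [ih] <;> omega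

lemma aCnt_add (u : ℕ → Bool) (i m n : ℕ) :
    aCnt u i (m + n) = aCnt u i m + aCnt u (i+m) n := by
  induction n with
  | zero => simp [aCnt]
  | succ n ih =>
    have h1 : aCnt u i (m + (n+1)) = aCnt u i (m+n) + chi u (i+(m+n)) := by
      rw [← Nat.add_assoc]; exact Finset.sum_range_succ _ _
    have h2 : aCnt u (i+m) (n+1) = aCnt u (i+m) n + chi u (i+m+n) := Finset.sum_range_succ _ _
    rw [h1, h2, ih, Nat.add_assoc, Nat.add_assoc]

lemma aCnt_le (u : ℕ → Bool) (i n : ℕ) : aCnt u i n ≤ n := by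
  calc aCnt u i n ≤ ∑ k ∈ Finset.range n, 1 := Finset.sum_le_sum (fun k _ => by
        rcases h : u (i+k) <;> simp [chi, h])
    _ = n := by simp

lemma isFactor_factorAt (u : ℕ → A) (i n : ℕ) : IsFactor u (factorAt u i n) :=
  ⟨i, by rw [OccursAt, factorAt_length]⟩

lemma balance {u : ℕ → Bool} (hbal : IsBalanced u) (i j n : ℕ) :
    (aCnt u i n : ℤ) - aCnt u j n ≤ 1 := by
  have := hbal false (factorAt u i n) (factorAt u j n) (isFactor_factorAt u i n)
    (isFactor_factorAt u j n) (by rw [factorAt_length, factorAt_length])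
  rwa [count_false_factorAt, count_false_factorAt] at this

lemma aCnt_mul (u : ℕ → Bool) (i n N : ℕ) :
    aCnt u i (N * n) = ∑ t ∈ Finset.range N, aCnt u (i + t*n) n := by
  induction N with
  | zero => simp [aCnt]
  | succ N ih => rw [Nat.succ_mul, aCnt_add, ih, Finset.sum_range_succ]

/-- frequency of `a = false` -/
def FreqA (u : ℕ → Bool) (α : ℝ) : Prop :=
  Tendsto (fun m => (aCnt u 0 m : ℝ) / m) atTop (𝓝 α)

lemma window_sum_lb {u : ℕ → Bool} (hbal : IsBalanced u) (i n N : ℕ) :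
    (N : ℤ) * ((aCnt u i n : ℤ) - 1) ≤ aCnt u i (N*n) ∧
    (aCnt u i (N*n) : ℤ) ≤ (N : ℤ) * ((aCnt u i n : ℤ) + 1) := by
  have h := aCnt_mul u i n N
  have hc : (aCnt u i (N*n) : ℤ) = ∑ t ∈ Finset.range N, (aCnt u (i + t*n) n : ℤ) := by
    rw [h]; push_cast; ring
  constructor
  · rw [hc]
    calc (N:ℤ) * ((aCnt u i n : ℤ) - 1) = ∑ _t ∈ Finset.range N, ((aCnt u i n : ℤ) - 1) := by
          rw [Finset.sum_const, Finset.card_range]; push_cast; ring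
      _ ≤ _ := Finset.sum_le_sum (fun t _ => by
          have := balance hbal i (i + t*n) n; omega)
  · rw [hc]
    calc (∑ t ∈ Finset.range N, (aCnt u (i + t*n) n : ℤ))
        ≤ ∑ _t ∈ Finset.range N, ((aCnt u i n : ℤ) + 1) := Finset.sum_le_sum (fun t _ => by
          have := balance hbal (i + t*n) i n; omega)
      _ = (N:ℤ) * ((aCnt u i n : ℤ) + 1) := by
          rw [Finset.sum_const, Finset.card_range]; push_cast; ring

lemma window_bound {u : ℕ → Bool} {α : ℝ} (hbal : IsBalanced u) (hf : FreqA u α)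
    (i n : ℕ) (hn : 0 < n) :
    (aCnt u i n : ℝ) - 1 ≤ n * α ∧ (n:ℝ) * α ≤ aCnt u i n + 1 := by
  -- the limit along windows of length N*n starting at i
  have hpsi : Tendsto (fun N => N*n) atTop atTop :=
    tendsto_atTop_mono (fun N => Nat.le_mul_of_pos_right N hn) tendsto_id
  have hphi : Tendsto (fun N => i + N*n) atTop atTop :=
    tendsto_atTop_mono (fun N => Nat.le_add_left _ _) hpsi
  have h1 : Tendsto (fun N => (aCnt u 0 (i+N*n):ℝ)/((i:ℝ)+(N*n:ℕ))) atTop (𝓝 α) := by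
    have := hf.comp hphi
    refine this.congr (fun N => ?_)
    simp only [Function.comp]
    push_cast
    ring
  have hNn : Tendsto (fun N : ℕ => ((N*n : ℕ):ℝ)) atTop atTop :=
    tendsto_natCast_atTop_atTop.comp hpsi
  have hinv : Tendsto (fun N : ℕ => ((N*n : ℕ):ℝ)⁻¹) atTop (𝓝 0) :=
    hNn.inv_tendsto_atTop
  have h2 : Tendsto (fun N : ℕ => ((i:ℝ)+(N*n:ℕ))/((N*n:ℕ):ℝ)) atTop (𝓝 1) := by
    have : Tendsto (fun N : ℕ => (i:ℝ) * ((N*n:ℕ):ℝ)⁻¹ + ((N*n:ℕ):ℝ) * ((N*n:ℕ):ℝ)⁻¹)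
        atTop (𝓝 1) := by
      have ha : Tendsto (fun N : ℕ => (i:ℝ) * ((N*n:ℕ):ℝ)⁻¹) atTop (𝓝 0) := by
        simpa using tendsto_const_nhds.mul hinv
      have hb : Tendsto (fun N : ℕ => ((N*n:ℕ):ℝ) * ((N*n:ℕ):ℝ)⁻¹) atTop (𝓝 1) := by
        refine Tendsto.congr' ?_ tendsto_const_nhds
        filter_upwards [hpsi.eventually_gt_atTop 0] with N hN
        have : ((N*n:ℕ):ℝ) ≠ 0 := by positivity
        rw [mul_inv_cancel₀ this]
      simpa using ha.add hb
    refine this.congr (fun N => ?_)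
    rw [div_eq_mul_inv, add_mul]
  have h3 : Tendsto (fun N : ℕ => (aCnt u 0 i : ℝ) * ((N*n:ℕ):ℝ)⁻¹) atTop (𝓝 0) := by
    simpa using tendsto_const_nhds.mul hinv
  have hmain : Tendsto (fun N => (aCnt u i (N*n) : ℝ)/((N*n:ℕ):ℝ)) atTop (𝓝 α) := by
    have hcomb :
        Tendsto (fun N => (aCnt u 0 (i+N*n):ℝ)/((i:ℝ)+(N*n:ℕ)) * (((i:ℝ)+(N*n:ℕ))/((N*n:ℕ):ℝ))
          - (aCnt u 0 i : ℝ) * ((N*n:ℕ):ℝ)⁻¹) atTop (𝓝 (α * 1 - 0)) :=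
      (h1.mul h2).sub h3
    rw [mul_one, sub_zero] at hcomb
    refine hcomb.congr' ?_
    filter_upwards [hpsi.eventually_gt_atTop 0] with N hN
    have hz : ((N*n:ℕ):ℝ) ≠ 0 := by positivity
    have hz2 : (i:ℝ)+((N*n:ℕ):ℝ) ≠ 0 := by positivity
    have hsplit : (aCnt u 0 (i + N*n) : ℝ) = (aCnt u 0 i : ℝ) + (aCnt u i (N*n) : ℝ) := by
      rw [aCnt_add]; push_cast; ring
    have hcan : (aCnt u 0 (i+N*n):ℝ)/((i:ℝ)+(N*n:ℕ)) * (((i:ℝ)+(N*n:ℕ))/((N*n:ℕ):ℝ))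
        = (aCnt u 0 (i+N*n):ℝ)/((N*n:ℕ):ℝ) := by
      field_simp
    rw [hcan, hsplit]; ring
  constructor
  · have hev : ∀ᶠ N in atTop, ((aCnt u i n : ℝ) - 1)/n ≤ (aCnt u i (N*n) : ℝ)/((N*n:ℕ):ℝ) := by
      filter_upwards [Filter.eventually_gt_atTop 0] with N hN
      have hb := (window_sum_lb hbal i n N).1
      have hb' : (N:ℝ) * ((aCnt u i n : ℝ) - 1) ≤ (aCnt u i (N*n) : ℝ) := by exact_mod_cast hb
      rw [div_le_div_iff₀ (by positivity) (by positivity)]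
      push_cast
      nlinarith [hb']
    have := ge_of_tendsto hmain hev
    rw [div_le_iff₀ (by positivity : (0:ℝ) < n)] at this
    linarith [this]
  · have hev : ∀ᶠ N in atTop, (aCnt u i (N*n) : ℝ)/((N*n:ℕ):ℝ) ≤ ((aCnt u i n : ℝ) + 1)/n := by
      filter_upwards [Filter.eventually_gt_atTop 0] with N hN
      have hb := (window_sum_lb hbal i n N).2
      have hb' : (aCnt u i (N*n) : ℝ) ≤ (N:ℝ) * ((aCnt u i n : ℝ) + 1) := by exact_mod_cast hb
      rw [div_le_div_iff₀ (by positivity) (by positivity)]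
      push_cast
      nlinarith [hb']
    have := le_of_tendsto hmain hev
    rw [le_div_iff₀ (by positivity : (0:ℝ) < n)] at this
    linarith [this]

lemma aCnt_one (u : ℕ → Bool) (i : ℕ) : aCnt u i 1 = chi u i := by
  simp [aCnt]

lemma aCnt_succ_right (u : ℕ → Bool) (i n : ℕ) :
    aCnt u i (n+1) = aCnt u i n + chi u (i+n) := Finset.sum_range_succ _ _

lemma aCnt_succ_left (u : ℕ → Bool) (i n : ℕ) :
    aCnt u i (n+1) = chi u i + aCnt u (i+1) n := by
  have h := aCnt_add u i 1 n
  rw [Nat.add_comm 1 n] at h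
  rw [h, aCnt_one]

lemma step_of_eq {u : ℕ → Bool} {i n : ℕ} (h : aCnt u i n = aCnt u (i+1) n) :
    u (i+n) = u i := by
  have h1 := aCnt_succ_right u i n
  have h2 := aCnt_succ_left u i n
  have hc : chi u (i+n) = chi u i := by omega
  unfold chi at hc
  rcases hui : u i <;> rcases huin : u (i+n) <;> simp [hui, huin] at hc ⊢

lemma exists_dev {u : ℕ → Bool} (hap : ¬ EventuallyPeriodic u) {n : ℕ} (hn : 0 < n)
    (q : ℤ) (N : ℕ) : ∃ i, N ≤ i ∧ (aCnt u i n : ℤ) ≠ q := by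
  by_contra h; push_neg at h
  refine hap ⟨n, hn, N, fun i hi => ?_⟩
  apply step_of_eq
  have h1 := h i hi
  have h2 := h (i+1) (by omega)
  omega

lemma nalpha_not_int {u : ℕ → Bool} {α : ℝ} (hbal : IsBalanced u)
    (hap : ¬ EventuallyPeriodic u) (hf : FreqA u α) {n : ℕ} (hn : 0 < n) (p : ℤ) :
    (n:ℝ) * α ≠ (p:ℝ) := by
  intro hp
  -- every window value is within 1 of p
  have hwin : ∀ i, p - 1 ≤ (aCnt u i n : ℤ) ∧ (aCnt u i n : ℤ) ≤ p + 1 := by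
    intro i
    have hb := window_bound hbal hf i n hn
    have h1 : (aCnt u i n : ℝ) - 1 ≤ (p:ℝ) := by rw [← hp]; exact hb.1
    have h2 : (p:ℝ) ≤ (aCnt u i n : ℝ) + 1 := by rw [← hp]; exact hb.2
    have h1' : (aCnt u i n : ℤ) - 1 ≤ p := by exact_mod_cast h1
    have h2' : p ≤ (aCnt u i n : ℤ) + 1 := by exact_mod_cast h2
    omega
  -- an increasing sequence of deviation positions
  choose f hf1 hf2 using exists_dev hap hn p
  set idx : ℕ → ℕ := fun m => Nat.rec (f 0) (fun _ prev => f (prev+1)) m with hidx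
  have hidx0 : idx 0 = f 0 := rfl
  have hidxs : ∀ m, idx (m+1) = f (idx m + 1) := fun m => rfl
  have hdev : ∀ m, (aCnt u (idx m) n : ℤ) ≠ p := by
    intro m; cases m with
    | zero => rw [hidx0]; exact hf2 0
    | succ m => rw [hidxs]; exact hf2 _
  have hmono : StrictMono idx := by
    apply strictMono_nat_of_lt_succ
    intro m
    have := hf1 (idx m + 1)
    rw [hidxs]; omega
  -- pigeonhole on residues mod n
  obtain ⟨s, hs, t, ht, hst, hres⟩ :=
    Finset.exists_ne_map_eq_of_card_lt_of_maps_to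
      (s := Finset.range (n+1)) (t := Finset.range n)
      (by simp) (f := fun m => idx m % n)
      (fun a _ => Finset.mem_range.mpr (Nat.mod_lt _ hn))
  wlog hstlt : s < t generalizing s t
  · exact this t ht s hs (Ne.symm hst) hres.symm (by omega)
  have hij : idx s < idx t := hmono hstlt
  have hdevi : (aCnt u (idx s) n : ℤ) ≠ p := hdev s
  have hdevj : (aCnt u (idx t) n : ℤ) ≠ p := hdev t
  obtain ⟨i, hi⟩ : ∃ i, i = idx s := ⟨_, rfl⟩
  obtain ⟨j, hj⟩ : ∃ j, j = idx t := ⟨_, rfl⟩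
  rw [← hi] at hij hdevi
  rw [← hj] at hij hdevj
  have hres' : i % n = j % n := by rw [hi, hj]; exact hres
  clear hres hi hj
  have hdvd : n ∣ j - i := (Nat.modEq_iff_dvd' (le_of_lt hij)).mp hres'
  obtain ⟨d, hd⟩ := hdvd
  have hd1 : 1 ≤ d := by
    rcases Nat.eq_zero_or_pos d with h0 | h1
    · subst h0; rw [Nat.mul_zero] at hd; omega
    · exact h1
  have hd' : j - i = d * n := by rw [Nat.mul_comm] at hd; exact hd
  have hjid : j = i + d * n := by omega
  -- the two deviating values are equal (balance)
  have hbi := balance hbal i j n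
  have hbj := balance hbal j i n
  have hwi := hwin i
  have hwj := hwin j
  -- sum over the d+1 windows from i to j
  have hsum : (aCnt u i ((d+1)*n) : ℤ) = ∑ r ∈ Finset.range (d+1), (aCnt u (i + r*n) n : ℤ) := by
    rw [aCnt_mul]; push_cast; ring
  have hlast : i + d * n = j := hjid.symm
  have hne0d : (0:ℕ) ≠ d := by omega
  -- global bound for the big window
  have hbig := window_bound hbal hf i ((d+1)*n) (by positivity)
  have hbigval : (((d+1)*n : ℕ):ℝ) * α = (((d+1 : ℤ) * p : ℤ) : ℝ) := by
    push_cast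
    rw [mul_assoc, hp]
  have h0n : i + 0 * n = i := by omega
  rcases (by omega : (aCnt u i n : ℤ) = p + 1 ∨ (aCnt u i n : ℤ) = p - 1) with hcase | hcase
  · -- all windows ≥ p, two windows = p+1
    have hge : ∀ r, p ≤ (aCnt u r n : ℤ) := by
      intro r
      have := balance hbal i r n
      omega
    have hjval : (aCnt u j n : ℤ) = p + 1 := by omega
    have hsum2 : (aCnt u i ((d+1)*n) : ℤ) - (d+1 : ℤ) * p
        = ∑ r ∈ Finset.range (d+1), ((aCnt u (i + r*n) n : ℤ) - p) := by
      rw [Finset.sum_sub_distrib, Finset.sum_const, Finset.card_range, nsmul_eq_mul, hsum]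
      push_cast; ring
    have h2le : 2 ≤ (aCnt u i ((d+1)*n) : ℤ) - (d+1 : ℤ) * p := by
      rw [hsum2]
      calc (2:ℤ) = ∑ r ∈ ({0, d} : Finset ℕ), ((aCnt u (i + r*n) n : ℤ) - p) := by
            rw [Finset.sum_pair hne0d, h0n, hlast, hcase, hjval]; ring
        _ ≤ _ := by
            apply Finset.sum_le_sum_of_subset_of_nonneg
            · intro x hx
              simp only [Finset.mem_insert, Finset.mem_singleton] at hx
              rcases hx with rfl | rfl <;> simp [Finset.mem_range] <;> omega
            · intro r _ _
              have := hge (i + r*n); omega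
    have hreal : (((d+1 : ℤ) * p : ℤ) : ℝ) + 2 ≤ (aCnt u i ((d+1)*n) : ℝ) := by
      have := h2le
      exact_mod_cast (by omega : ((d+1 : ℤ) * p) + 2 ≤ (aCnt u i ((d+1)*n) : ℤ))
    have hub := hbig.1
    rw [hbigval] at hub
    linarith
  · -- all windows ≤ p, two windows = p-1
    have hle : ∀ r, (aCnt u r n : ℤ) ≤ p := by
      intro r
      have := balance hbal r i n
      omega
    have hjval : (aCnt u j n : ℤ) = p - 1 := by omega
    have hsum2 : (d+1 : ℤ) * p - (aCnt u i ((d+1)*n) : ℤ)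
        = ∑ r ∈ Finset.range (d+1), (p - (aCnt u (i + r*n) n : ℤ)) := by
      rw [Finset.sum_sub_distrib, Finset.sum_const, Finset.card_range, nsmul_eq_mul, hsum]
      push_cast; ring
    have h2le : 2 ≤ (d+1 : ℤ) * p - (aCnt u i ((d+1)*n) : ℤ) := by
      rw [hsum2]
      calc (2:ℤ) = ∑ r ∈ ({0, d} : Finset ℕ), (p - (aCnt u (i + r*n) n : ℤ)) := by
            rw [Finset.sum_pair hne0d, h0n, hlast, hcase, hjval]; ring
        _ ≤ _ := by
            apply Finset.sum_le_sum_of_subset_of_nonneg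
            · intro x hx
              simp only [Finset.mem_insert, Finset.mem_singleton] at hx
              rcases hx with rfl | rfl <;> simp [Finset.mem_range] <;> omega
            · intro r _ _
              have := hle (i + r*n); omega
    have hreal : (aCnt u i ((d+1)*n) : ℝ) + 2 ≤ (((d+1 : ℤ) * p : ℤ) : ℝ) := by
      have := h2le
      exact_mod_cast (by omega : ((aCnt u i ((d+1)*n) : ℤ)) + 2 ≤ (d+1 : ℤ) * p)
    have hlb := hbig.2
    rw [hbigval] at hlb
    linarith

lemma window_bound_strict {u : ℕ → Bool} {α : ℝ} (hbal : IsBalanced u)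
    (hap : ¬ EventuallyPeriodic u) (hf : FreqA u α) (i : ℕ) {n : ℕ} (hn : 0 < n) :
    |(aCnt u i n : ℝ) - n * α| < 1 := by
  have hb := window_bound hbal hf i n hn
  rw [abs_sub_lt_iff]
  constructor
  · rcases lt_or_eq_of_le hb.1 with h | h
    · linarith
    · exfalso
      apply nalpha_not_int hbal hap hf hn ((aCnt u i n : ℤ) - 1)
      push_cast
      linarith
  · rcases lt_or_eq_of_le hb.2 with h | h
    · linarith
    · exfalso
      apply nalpha_not_int hbal hap hf hn ((aCnt u i n : ℤ) + 1)
      push_cast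
      linarith

lemma attain {u : ℕ → Bool} {α : ℝ} (hbal : IsBalanced u)
    (hap : ¬ EventuallyPeriodic u) (hf : FreqA u α) {n : ℕ} (hn : 0 < n) (l : ℕ)
    (hl : |(l:ℝ) - n * α| < 1) : ∃ i, aCnt u i n = l := by
  by_contra hno; push_neg at hno
  -- every window value is within 1 of l (in ℤ)
  have hval : ∀ r, (aCnt u r n : ℤ) - l ≤ 1 ∧ (l:ℤ) - aCnt u r n ≤ 1 := by
    intro r
    have h := window_bound_strict hbal hap hf r hn
    rw [abs_sub_lt_iff] at h hl
    have h1 : (aCnt u r n : ℝ) - (l:ℝ) < 2 := by linarith [h.1, hl.2]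
    have h2 : (l:ℝ) - (aCnt u r n : ℝ) < 2 := by linarith [h.2, hl.1]
    have h1' : (aCnt u r n : ℤ) - (l:ℤ) < 2 := by exact_mod_cast h1
    have h2' : (l:ℤ) - (aCnt u r n : ℤ) < 2 := by exact_mod_cast h2
    omega
  apply hap
  refine ⟨n, hn, 0, fun i _ => ?_⟩
  apply step_of_eq
  have hx := hval i
  have hy := hval (i+1)
  have hnex : aCnt u i n ≠ l := hno i
  have hney : aCnt u (i+1) n ≠ l := hno (i+1)
  have hb1 := balance hbal i (i+1) n
  have hb2 := balance hbal (i+1) i n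
  omega

lemma parikh_iff_alpha {u : ℕ → Bool} {α : ℝ} (hbal : IsBalanced u)
    (hap : ¬ EventuallyPeriodic u) (hf : FreqA u α) (k l : ℕ) :
    (∃ w : List Bool, IsFactor u w ∧ w.count true = k ∧ w.count false = l) ↔
      |(l:ℝ) - ((k:ℝ)+(l:ℝ)) * α| < 1 := by
  rcases Nat.eq_zero_or_pos (k + l) with hkl | hkl
  · have hk : k = 0 := by omega
    have hl : l = 0 := by omega
    subst hk; subst hl
    simp only [Nat.cast_zero]
    constructor
    · intro _; norm_num
    · intro _
      exact ⟨[], ⟨0, by simp [OccursAt, factorAt]⟩, by simp, by simp⟩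
  · constructor
    · rintro ⟨w, ⟨i, hocc⟩, hk, hl⟩
      have hlen : w.length = k + l := by
        rw [← count_true_add_count_false w, hk, hl]
      have hcnt : aCnt u i (k+l) = l := by
        rw [← count_false_factorAt, ← hlen, ← hocc]
        exact hl
      have hsb := window_bound_strict hbal hap hf i hkl
      rw [hcnt] at hsb
      push_cast at hsb
      exact hsb
    · intro h
      obtain ⟨i, hi⟩ := attain hbal hap hf hkl l (by push_cast; exact h)
      refine ⟨factorAt u i (k+l), isFactor_factorAt u i (k+l), ?_, ?_⟩
      · have h2 := count_true_add_count_false (factorAt u i (k+l))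
        rw [factorAt_length, count_false_factorAt, hi] at h2
        omega
      · rw [count_false_factorAt, hi]

/-- Let `u` be a Sturmian sequence with slope
`θ = ρ_a(u)/ρ_b(u) < 1` and `δ = θ⁻¹`. Then `u` contains a factor `w` with
`|w|_b = k` and `|w|_a = l` if and only if `|l·δ − k| < δ + 1`. -/
theorem sturmian_factor_parikh_iff
    (u : ℕ → Bool) (θ δ : ℝ)
    (hu : IsSturmian u) (hθ : HasSlope u θ) (hδ : δ = θ⁻¹)
    (k l : ℕ) :
    (∃ w : List Bool, IsFactor u w ∧ w.count true = k ∧ w.count false = l) ↔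
      |(l : ℝ) * δ - k| < δ + 1 := by
  obtain ⟨hap, hbal⟩ := hu
  obtain ⟨ρa, ρb, hfa, hfb, hab, hθeq⟩ := hθ
  have hf : FreqA u ρa := by
    refine hfa.congr (fun m => ?_)
    rw [count_false_factorAt]
  have hα0 : 0 < ρa := by
    have hge0 : 0 ≤ ρa := ge_of_tendsto' hf (fun m => by positivity)
    have hne : ρa ≠ 0 := by
      have h := nalpha_not_int hbal hap hf (n := 1) one_pos 0
      push_cast at h
      simpa using h
    exact lt_of_le_of_ne hge0 (Ne.symm hne)
  have hfb' : Tendsto (fun m => 1 - (aCnt u 0 m : ℝ)/m) atTop (𝓝 (1 - ρa)) :=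
    tendsto_const_nhds.sub hf
  have hfb2 : Tendsto (fun m => (((factorAt u 0 m).count true) : ℝ)/m) atTop (𝓝 (1 - ρa)) := by
    refine hfb'.congr' ?_
    filter_upwards [Filter.eventually_gt_atTop 0] with m hm
    have h2 := count_true_add_count_false (factorAt u 0 m)
    rw [factorAt_length, count_false_factorAt] at h2
    have hm0 : (m:ℝ) ≠ 0 := by positivity
    have hcast : ((factorAt u 0 m).count true : ℝ) + (aCnt u 0 m : ℝ) = (m:ℝ) := by
      exact_mod_cast h2
    field_simp
    linarith
  have hρb : ρb = 1 - ρa := tendsto_nhds_unique hfb hfb2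
  have hδval : δ = (1 - ρa)/ρa := by
    rw [hδ, hθeq, hρb, inv_div]
  have hδα : δ * ρa = 1 - ρa := by
    rw [hδval]; field_simp
  have hδ1α : (δ + 1) * ρa = 1 := by
    rw [hδval]; field_simp; ring
  have habs : |(l:ℝ)*δ - k| * ρa = |(l:ℝ) - ((k:ℝ)+(l:ℝ)) * ρa| := by
    have h1 := abs_mul ((l:ℝ)*δ - k) ρa
    rw [abs_of_pos hα0] at h1
    rw [← h1]
    congr 1
    linear_combination (l:ℝ) * hδα
  have hiff : |(l:ℝ)*δ - k| < δ + 1 ↔ |(l:ℝ) - ((k:ℝ)+(l:ℝ)) * ρa| < 1 := by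
    constructor
    · intro h
      have h2 := mul_lt_mul_of_pos_right h hα0
      rwa [hδ1α, habs] at h2
    · intro h
      have h2 : |(l:ℝ)*δ - k| * ρa < (δ + 1) * ρa := by
        rw [hδ1α, habs]; exact h
      exact lt_of_mul_lt_mul_right h2 hα0.le
  exact (parikh_iff_alpha hbal hap hf k l).trans hiff.symm

end Paper
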